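/- (Proposition 6, relation 14: Hochschild 3-cocycle condition for α.) In the pre-extension setting, for all x, y, z, t ∈ R: φ_x(α(y,z,t)) − α(xy,z,t) + α(x,yz,t) − α(x,y,zt) + ψ_t(α(x,y,z)) = 0. -/
import Mathlib


variable {R A : Type*}

/-- The bicenter `K_A = {c ∈ A : c·a = 0 = a·c for all a}`. -/
def bicenter (A : Type*) [NonUnitalRing A] : Set A :=
  {c | ∀ b : A, c * b = 0 ∧ b * c = 0}

/-- A pre-extension datum `(φ, ψ, f, g)` of the ring `A` by the ring `R`:
`φ_x, ψ_x ∈ End_ℤ(A)` and `f, g : R² → A` satisfying the relations (10) and the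
defining relations of the factor sets. -/
def IsPreExtension [Ring R] [NonUnitalRing A]
    (φ ψ : R → AddMonoid.End A) (f g : R → R → A) : Prop :=
  (∀ a : A, φ 1 a = a) ∧
  (∀ a : A, ψ 1 a = a) ∧
  (∀ (x : R) (a b : A), a * φ x b = ψ x a * b) ∧
  (∀ (x : R) (a b : A), φ x (a * b) = φ x a * b) ∧
  (∀ (x : R) (a b : A), ψ x (b * a) = b * ψ x a) ∧
  (∀ (x : R) (a b : A), ψ x b * a = b * φ x a) ∧
  (∀ (x y : R) (a : A), φ x (ψ y a) = ψ y (φ x a)) ∧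
  (∀ (x y : R) (a : A), φ x (φ y a) = φ (x * y) a + g x y * a) ∧
  (∀ (x y : R) (a : A), ψ y (ψ x a) = ψ (x * y) a + a * g x y) ∧
  (∀ (x y : R) (a : A), φ x a + φ y a = φ (x + y) a + f x y * a) ∧
  (∀ (x y : R) (a : A), ψ x a + ψ y a = ψ (x + y) a + a * f x y)

variable [Ring R] [NonUnitalRing A]

/-- The obstruction component `ξ`. -/
def xiObs (f : R → R → A) (x y z : R) : A :=
  f y z - f (x + y) z + f x (y + z) - f x y

/-- The obstruction component `η`. -/
def etaObs (f : R → R → A) (x y : R) : A :=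
  f x y - f y x

/-- The obstruction component `α`. -/
def alphaObs (φ ψ : R → AddMonoid.End A) (g : R → R → A) (x y z : R) : A :=
  φ x (g y z) - g (x * y) z + g x (y * z) - ψ z (g x y)

/-- The obstruction component `λ`. -/
def lambdaObs (φ : R → AddMonoid.End A) (f g : R → R → A) (x y z : R) : A :=
  φ x (f y z) - f (x * y) (x * z) + g x (y + z) - g x y - g x z

/-- The obstruction component `ρ`. -/
def rhoObs (ψ : R → AddMonoid.End A) (f g : R → R → A) (x y z : R) : A :=
  ψ z (f x y) - f (x * z) (y * z) + g (x + y) z - g x z - g y z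

/-- Proposition 6, relation 14: `α` satisfies the Hochschild
3-cocycle condition. -/
theorem alpha_hochschild_three_cocycle
    [Nontrivial R] (φ ψ : R → AddMonoid.End A) (f g : R → R → A)
    (h : IsPreExtension φ ψ f g) :
    ∀ x y z t : R,
      φ x (alphaObs φ ψ g y z t) - alphaObs φ ψ g (x * y) z t
        + alphaObs φ ψ g x (y * z) t - alphaObs φ ψ g x y (z * t)
        + ψ t (alphaObs φ ψ g x y z) = 0 := by
  obtain ⟨h1, h2, h3, h4, h5, h6, h7, h8, h9, h10, h11⟩ := h
  intro x y z t
  simp only [alphaObs, map_sub, map_add]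
  rw [h8 x y (g z t), h9 z t (g x y), h7 x t (g y z), mul_assoc y z t, mul_assoc x y z]
  abel
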